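/- (Case of general position: third frame expansion, relation I₅ = −I₈ of (3.10) together with formula (3.9) for I₈) Under the stated assumptions, ∇_Y X = −I₈·X + I₆·Y on U, where I₆ = (A_{0.1} − B_{1.0})/(3·F²) − (A·F_{0.1} − B·F_{1.0})/(3·F³) and I₈ = G·(A·G_{1.0} + B·H_{1.0})/(3·F⁹) + H·(A·G_{0.1} + B·H_{0.1})/(3·F⁹) − 10·(H·F_{0.1} + G·F_{1.0})/(3·F⁵) − B·G²·P/(3·F⁹) + (A·G² − 2·H·B·G)·Q/(3·F⁹) − (B·H² − 2·H·A·G)·R/(3·F⁹) + A·H²·S/(3·F⁹). -/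

import Mathlib

noncomputable section

open Real

/-- Partial derivative in the first argument (`f_{1.0}`). -/
def pdx (f : ℝ → ℝ → ℝ) : ℝ → ℝ → ℝ := fun x y => deriv (fun t => f t y) x

/-- Partial derivative in the second argument (`f_{0.1}`). -/
def pdy (f : ℝ → ℝ → ℝ) : ℝ → ℝ → ℝ := fun x y => deriv (fun t => f x t) y

/-- Indexed partial derivative: `0 ↦ ∂/∂x`, `1 ↦ ∂/∂y`. -/
def pd (i : Fin 2) (f : ℝ → ℝ → ℝ) : ℝ → ℝ → ℝ := if i = 0 then pdx f else pdy f

/-- Smoothness of a two-variable real function on a set `U ⊆ ℝ²`. -/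
def Smooth2 (U : Set (ℝ × ℝ)) (f : ℝ → ℝ → ℝ) : Prop :=
  ContDiffOn ℝ (⊤ : ℕ∞) (Function.uncurry f) U

/-- The quantity `A` of formula (1.6). -/
def coefA (P Q R S : ℝ → ℝ → ℝ) : ℝ → ℝ → ℝ := fun x y =>
  pdy (pdy P) x y - 2 * pdx (pdy Q) x y + pdx (pdx R) x y
    + 2 * P x y * pdx S x y + S x y * pdx P x y
    - 3 * P x y * pdy R x y - 3 * R x y * pdy P x y
    - 3 * Q x y * pdx R x y + 6 * Q x y * pdy Q x y

/-- The quantity `B` of formula (1.6). -/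
def coefB (P Q R S : ℝ → ℝ → ℝ) : ℝ → ℝ → ℝ := fun x y =>
  pdx (pdx S) x y - 2 * pdx (pdy R) x y + pdy (pdy Q) x y
    - 2 * S x y * pdy P x y - P x y * pdy S x y
    + 3 * S x y * pdx Q x y + 3 * Q x y * pdx S x y
    + 3 * R x y * pdy Q x y - 6 * R x y * pdx R x y

/-- The quantity `G` of formula (2.4). -/
def coefG (P Q R S : ℝ → ℝ → ℝ) : ℝ → ℝ → ℝ := fun x y =>
  -(coefB P Q R S x y) * pdx (coefB P Q R S) x y
    - 3 * coefA P Q R S x y * pdy (coefB P Q R S) x y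
    + 4 * coefB P Q R S x y * pdy (coefA P Q R S) x y
    + 3 * S x y * (coefA P Q R S x y)^2
    - 6 * R x y * coefA P Q R S x y * coefB P Q R S x y
    + 3 * Q x y * (coefB P Q R S x y)^2

/-- The quantity `H` of formula (2.4). -/
def coefH (P Q R S : ℝ → ℝ → ℝ) : ℝ → ℝ → ℝ := fun x y =>
  -(coefA P Q R S x y) * pdy (coefA P Q R S) x y
    - 3 * coefB P Q R S x y * pdx (coefA P Q R S) x y
    + 4 * coefA P Q R S x y * pdx (coefB P Q R S) x y
    - 3 * P x y * (coefB P Q R S x y)^2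
    + 6 * Q x y * coefA P Q R S x y * coefB P Q R S x y
    - 3 * R x y * (coefA P Q R S x y)^2

/-- The quantity `F⁵` of formula (2.2). -/
def coefF5 (P Q R S : ℝ → ℝ → ℝ) : ℝ → ℝ → ℝ := fun x y =>
  coefA P Q R S x y * coefB P Q R S x y * pdy (coefA P Q R S) x y
    + coefA P Q R S x y * coefB P Q R S x y * pdx (coefB P Q R S) x y
    - (coefA P Q R S x y)^2 * pdy (coefB P Q R S) x y
    - (coefB P Q R S x y)^2 * pdx (coefA P Q R S) x y
    - P x y * (coefB P Q R S x y)^3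
    + 3 * Q x y * coefA P Q R S x y * (coefB P Q R S x y)^2
    - 3 * R x y * (coefA P Q R S x y)^2 * coefB P Q R S x y
    + S x y * (coefA P Q R S x y)^3

/-- The fully covariant symbol `θ_{ijk}` of (2.7) built from the ODE coefficients. -/
def thetaLow (P Q R S : ℝ → ℝ → ℝ) (i j k : Fin 2) : ℝ → ℝ → ℝ :=
  match i.1 + j.1 + k.1 with
  | 0 => P
  | 1 => Q
  | 2 => R
  | _ => S

/-- The symbol `θ^k_{ij}` of (2.8), obtained by raising the first index with `d^{kr}`. -/
def thetaUp (P Q R S : ℝ → ℝ → ℝ) (k i j : Fin 2) : ℝ → ℝ → ℝ :=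
  if k = 0 then thetaLow P Q R S 1 i j
  else fun x y => -(thetaLow P Q R S 0 i j x y)

/-- The affine connection `Γ^k_{ij} = θ^k_{ij} − (φ_i δ^k_j + φ_j δ^k_i)/3` of (3.3)/(4.22). -/
def gamConn (P Q R S phi1 phi2 : ℝ → ℝ → ℝ) (k i j : Fin 2) : ℝ → ℝ → ℝ := fun x y =>
  thetaUp P Q R S k i j x y -
    ((if i = 0 then phi1 x y else phi2 x y) * (if k = j then (1:ℝ) else 0)
      + (if j = 0 then phi1 x y else phi2 x y) * (if k = i then (1:ℝ) else 0)) / 3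

/-- Covariant derivative `(∇_V W)^k = Σ_i V^i (∂W^k/∂x^i + Σ_s Γ^k_{is} W^s)`. -/
def covD (Gam : Fin 2 → Fin 2 → Fin 2 → ℝ → ℝ → ℝ) (V W : Fin 2 → ℝ → ℝ → ℝ)
    (k : Fin 2) : ℝ → ℝ → ℝ := fun x y =>
  ∑ i : Fin 2, V i x y * (pd i (W k) x y + ∑ s : Fin 2, Gam k i s x y * W s x y)

/-- The fifth root `F = (F⁵)^{1/5}` (real power), for the case of general position `F⁵ > 0`. -/
def frF (P Q R S : ℝ → ℝ → ℝ) : ℝ → ℝ → ℝ := fun x y =>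
  (coefF5 P Q R S x y) ^ ((1:ℝ)/5)

/-- `φ₁ = −F_{1.0}/F`. -/
def phiGP1 (P Q R S : ℝ → ℝ → ℝ) : ℝ → ℝ → ℝ := fun x y =>
  -(pdx (frF P Q R S) x y / frF P Q R S x y)

/-- `φ₂ = −F_{0.1}/F`. -/
def phiGP2 (P Q R S : ℝ → ℝ → ℝ) : ℝ → ℝ → ℝ := fun x y =>
  -(pdy (frF P Q R S) x y / frF P Q R S x y)

/-- The vector field `X = F⁻²·(B, −A)` of (3.4). -/
def frameX (P Q R S : ℝ → ℝ → ℝ) (k : Fin 2) : ℝ → ℝ → ℝ := fun x y =>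
  (if k = 0 then coefB P Q R S x y else -(coefA P Q R S x y)) / (frF P Q R S x y)^2

/-- The vector field `Y = F⁻⁴·(G, H)` of (3.4). -/
def frameY (P Q R S : ℝ → ℝ → ℝ) (k : Fin 2) : ℝ → ℝ → ℝ := fun x y =>
  (if k = 0 then coefG P Q R S x y else coefH P Q R S x y) / (frF P Q R S x y)^4

/-- The invariant `I₆` in the simplified form (3.11). -/
def inv6 (P Q R S : ℝ → ℝ → ℝ) : ℝ → ℝ → ℝ := fun x y =>
  (pdy (coefA P Q R S) x y - pdx (coefB P Q R S) x y) / (3 * (frF P Q R S x y)^2)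
    - (coefA P Q R S x y * pdy (frF P Q R S) x y
        - coefB P Q R S x y * pdx (frF P Q R S) x y) / (3 * (frF P Q R S x y)^3)

/-- The invariant `I₈` of formula (3.9). -/
def inv8 (P Q R S : ℝ → ℝ → ℝ) : ℝ → ℝ → ℝ := fun x y =>
  coefG P Q R S x y * (coefA P Q R S x y * pdx (coefG P Q R S) x y
      + coefB P Q R S x y * pdx (coefH P Q R S) x y) / (3 * (frF P Q R S x y)^9)
  + coefH P Q R S x y * (coefA P Q R S x y * pdy (coefG P Q R S) x y
      + coefB P Q R S x y * pdy (coefH P Q R S) x y) / (3 * (frF P Q R S x y)^9)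
  - 10 * (coefH P Q R S x y * pdy (frF P Q R S) x y
      + coefG P Q R S x y * pdx (frF P Q R S) x y) / (3 * (frF P Q R S x y)^5)
  - coefB P Q R S x y * (coefG P Q R S x y)^2 * P x y / (3 * (frF P Q R S x y)^9)
  + (coefA P Q R S x y * (coefG P Q R S x y)^2
      - 2 * coefH P Q R S x y * coefB P Q R S x y * coefG P Q R S x y) * Q x y
      / (3 * (frF P Q R S x y)^9)
  - (coefB P Q R S x y * (coefH P Q R S x y)^2
      - 2 * coefH P Q R S x y * coefA P Q R S x y * coefG P Q R S x y) * R x y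
      / (3 * (frF P Q R S x y)^9)
  + coefA P Q R S x y * (coefH P Q R S x y)^2 * S x y / (3 * (frF P Q R S x y)^9)



section Aux

namespace Smooth2
variable {U : Set (ℝ × ℝ)} {f g : ℝ → ℝ → ℝ} {x y : ℝ}

lemma diffAt (hf : Smooth2 U f) (hU : IsOpen U) (h : (x,y) ∈ U) :
    DifferentiableAt ℝ (Function.uncurry f) (x,y) :=
  (hf.contDiffAt (hU.mem_nhds h)).differentiableAt (by simp)

lemma hasDerivAt_slice_x (hd : DifferentiableAt ℝ (Function.uncurry f) (x,y)) :
    HasDerivAt (fun t => f t y) (pdx f x y) x := by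
  have h1 : HasDerivAt (fun t : ℝ => (t, y)) ((1:ℝ), (0:ℝ)) x :=
    HasDerivAt.prodMk (hasDerivAt_id x) (hasDerivAt_const x y)
  have h3 : HasDerivAt (fun t => f t y)
      (fderiv ℝ (Function.uncurry f) (x,y) ((1:ℝ),(0:ℝ))) x :=
    HasFDerivAt.comp_hasDerivAt (f := fun t : ℝ => (t, y)) x hd.hasFDerivAt h1
  have h4 : pdx f x y = fderiv ℝ (Function.uncurry f) (x,y) ((1:ℝ),(0:ℝ)) := h3.deriv
  rw [h4]; exact h3

lemma pdx_eq_fderiv (hd : DifferentiableAt ℝ (Function.uncurry f) (x,y)) :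
    pdx f x y = fderiv ℝ (Function.uncurry f) (x,y) ((1:ℝ),(0:ℝ)) :=
  (HasFDerivAt.comp_hasDerivAt (f := fun t : ℝ => (t, y)) x hd.hasFDerivAt
    (HasDerivAt.prodMk (hasDerivAt_id x) (hasDerivAt_const x y))).deriv

lemma hasDerivAt_slice_y (hd : DifferentiableAt ℝ (Function.uncurry f) (x,y)) :
    HasDerivAt (fun t => f x t) (pdy f x y) y := by
  have h1 : HasDerivAt (fun t : ℝ => (x, t)) ((0:ℝ), (1:ℝ)) y :=
    HasDerivAt.prodMk (hasDerivAt_const y x) (hasDerivAt_id y)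
  have h3 : HasDerivAt (fun t => f x t)
      (fderiv ℝ (Function.uncurry f) (x,y) ((0:ℝ),(1:ℝ))) y :=
    hd.hasFDerivAt.comp_hasDerivAt y h1
  have h4 : pdy f x y = fderiv ℝ (Function.uncurry f) (x,y) ((0:ℝ),(1:ℝ)) := h3.deriv
  rw [h4]; exact h3

lemma pdy_eq_fderiv (hd : DifferentiableAt ℝ (Function.uncurry f) (x,y)) :
    pdy f x y = fderiv ℝ (Function.uncurry f) (x,y) ((0:ℝ),(1:ℝ)) :=
  (hd.hasFDerivAt.comp_hasDerivAt y
    (HasDerivAt.prodMk (hasDerivAt_const y x) (hasDerivAt_id y))).deriv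

lemma sliceX (hf : Smooth2 U f) (hU : IsOpen U) (h : (x,y) ∈ U) :
    HasDerivAt (fun t => f t y) (pdx f x y) x :=
  hasDerivAt_slice_x (hf.diffAt hU h)

lemma sliceY (hf : Smooth2 U f) (hU : IsOpen U) (h : (x,y) ∈ U) :
    HasDerivAt (fun t => f x t) (pdy f x y) y :=
  hasDerivAt_slice_y (hf.diffAt hU h)

lemma pdxS (hU : IsOpen U) (hf : Smooth2 U f) : Smooth2 U (pdx f) := by
  have hfd : ContDiffOn ℝ (⊤:ℕ∞) (fderiv ℝ (Function.uncurry f)) U :=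
    hf.fderiv_of_isOpen hU (le_of_eq (by rfl))
  have h2 : ContDiffOn ℝ (⊤:ℕ∞)
      (fun p : ℝ×ℝ => fderiv ℝ (Function.uncurry f) p ((1:ℝ),(0:ℝ))) U :=
    (ContinuousLinearMap.apply ℝ ℝ ((1:ℝ),(0:ℝ))).contDiff.comp_contDiffOn hfd
  refine h2.congr ?_
  rintro ⟨x,y⟩ hp
  exact pdx_eq_fderiv (hf.diffAt hU hp)

lemma pdyS (hU : IsOpen U) (hf : Smooth2 U f) : Smooth2 U (pdy f) := by
  have hfd : ContDiffOn ℝ (⊤:ℕ∞) (fderiv ℝ (Function.uncurry f)) U :=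
    hf.fderiv_of_isOpen hU (le_of_eq (by rfl))
  have h2 : ContDiffOn ℝ (⊤:ℕ∞)
      (fun p : ℝ×ℝ => fderiv ℝ (Function.uncurry f) p ((0:ℝ),(1:ℝ))) U :=
    (ContinuousLinearMap.apply ℝ ℝ ((0:ℝ),(1:ℝ))).contDiff.comp_contDiffOn hfd
  refine h2.congr ?_
  rintro ⟨x,y⟩ hp
  exact pdy_eq_fderiv (hf.diffAt hU hp)

end Smooth2

variable {U : Set (ℝ × ℝ)} {P Q R S : ℝ → ℝ → ℝ}

lemma smoothA (hU : IsOpen U) (hP : Smooth2 U P) (hQ : Smooth2 U Q)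
    (hR : Smooth2 U R) (hS : Smooth2 U S) : Smooth2 U (coefA P Q R S) := by
  have h1 := Smooth2.pdyS hU (Smooth2.pdyS hU hP)
  have h2 := Smooth2.pdxS hU (Smooth2.pdyS hU hQ)
  have h3 := Smooth2.pdxS hU (Smooth2.pdxS hU hR)
  have h5 := Smooth2.pdxS hU hS
  have h7 := Smooth2.pdxS hU hP
  have h8 := Smooth2.pdyS hU hR
  have h10 := Smooth2.pdyS hU hP
  have h12 := Smooth2.pdxS hU hR
  have h13 := Smooth2.pdyS hU hQ
  unfold Smooth2 coefA Function.uncurry at *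
  fun_prop

lemma smoothB (hU : IsOpen U) (hP : Smooth2 U P) (hQ : Smooth2 U Q)
    (hR : Smooth2 U R) (hS : Smooth2 U S) : Smooth2 U (coefB P Q R S) := by
  have h1 := Smooth2.pdxS hU (Smooth2.pdxS hU hS)
  have h2 := Smooth2.pdxS hU (Smooth2.pdyS hU hR)
  have h3 := Smooth2.pdyS hU (Smooth2.pdyS hU hQ)
  have h5 := Smooth2.pdyS hU hP
  have h7 := Smooth2.pdyS hU hS
  have h8 := Smooth2.pdxS hU hQ
  have h10 := Smooth2.pdxS hU hS
  have h12 := Smooth2.pdyS hU hQ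
  have h13 := Smooth2.pdxS hU hR
  unfold Smooth2 coefB Function.uncurry at *
  fun_prop

lemma smoothG (hU : IsOpen U) (hP : Smooth2 U P) (hQ : Smooth2 U Q)
    (hR : Smooth2 U R) (hS : Smooth2 U S) : Smooth2 U (coefG P Q R S) := by
  have hA := smoothA hU hP hQ hR hS
  have hB := smoothB hU hP hQ hR hS
  have h1 := Smooth2.pdxS hU hB
  have h2 := Smooth2.pdyS hU hB
  have h3 := Smooth2.pdyS hU hA
  unfold Smooth2 coefG Function.uncurry at *
  fun_prop

lemma smoothH (hU : IsOpen U) (hP : Smooth2 U P) (hQ : Smooth2 U Q)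
    (hR : Smooth2 U R) (hS : Smooth2 U S) : Smooth2 U (coefH P Q R S) := by
  have hA := smoothA hU hP hQ hR hS
  have hB := smoothB hU hP hQ hR hS
  have h1 := Smooth2.pdyS hU hA
  have h2 := Smooth2.pdxS hU hA
  have h3 := Smooth2.pdxS hU hB
  unfold Smooth2 coefH Function.uncurry at *
  fun_prop

lemma smoothF5 (hU : IsOpen U) (hP : Smooth2 U P) (hQ : Smooth2 U Q)
    (hR : Smooth2 U R) (hS : Smooth2 U S) : Smooth2 U (coefF5 P Q R S) := by
  have hA := smoothA hU hP hQ hR hS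
  have hB := smoothB hU hP hQ hR hS
  have h1 := Smooth2.pdyS hU hA
  have h2 := Smooth2.pdxS hU hA
  have h3 := Smooth2.pdxS hU hB
  have h4 := Smooth2.pdyS hU hB
  unfold Smooth2 coefF5 Function.uncurry at *
  fun_prop

lemma pd0 (f : ℝ → ℝ → ℝ) : pd 0 f = pdx f := rfl
lemma pd1 (f : ℝ → ℝ → ℝ) : pd 1 f = pdy f := rfl

section gamvals
variable (p1 p2 : ℝ → ℝ → ℝ) (x y : ℝ)

lemma gam000 : gamConn P Q R S p1 p2 0 0 0 x y
    = Q x y - (p1 x y * 1 + p1 x y * 1)/3 := rfl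
lemma gam001 : gamConn P Q R S p1 p2 0 0 1 x y
    = R x y - (p1 x y * 0 + p2 x y * 1)/3 := rfl
lemma gam010 : gamConn P Q R S p1 p2 0 1 0 x y
    = R x y - (p2 x y * 1 + p1 x y * 0)/3 := rfl
lemma gam011 : gamConn P Q R S p1 p2 0 1 1 x y
    = S x y - (p2 x y * 0 + p2 x y * 0)/3 := rfl
lemma gam100 : gamConn P Q R S p1 p2 1 0 0 x y
    = -(P x y) - (p1 x y * 0 + p1 x y * 0)/3 := rfl
lemma gam101 : gamConn P Q R S p1 p2 1 0 1 x y
    = -(Q x y) - (p1 x y * 1 + p2 x y * 0)/3 := rfl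
lemma gam110 : gamConn P Q R S p1 p2 1 1 0 x y
    = -(Q x y) - (p2 x y * 0 + p1 x y * 1)/3 := rfl
lemma gam111 : gamConn P Q R S p1 p2 1 1 1 x y
    = -(R x y) - (p2 x y * 1 + p2 x y * 1)/3 := rfl

lemma frameX0 : frameX P Q R S 0 x y = coefB P Q R S x y / (frF P Q R S x y)^2 := rfl
lemma frameX1 : frameX P Q R S 1 x y = -(coefA P Q R S x y) / (frF P Q R S x y)^2 := rfl
lemma frameY0 : frameY P Q R S 0 x y = coefG P Q R S x y / (frF P Q R S x y)^4 := rfl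
lemma frameY1 : frameY P Q R S 1 x y = coefH P Q R S x y / (frF P Q R S x y)^4 := rfl

end gamvals

end Aux
set_option maxHeartbeats 2000000 in
/-- Third frame expansion of (3.5): `∇_Y X = −I₈·X + I₆·Y` (formula (3.9) for `I₈`
and relation `I₅ = −I₈` of (3.10)). -/
theorem frame_expansion_YX
    (U : Set (ℝ × ℝ)) (hU : IsOpen U) (hUconn : IsConnected U)
    (P Q R S : ℝ → ℝ → ℝ)
    (hP : Smooth2 U P) (hQ : Smooth2 U Q) (hR : Smooth2 U R) (hS : Smooth2 U S)
    (hpos : ∀ x y : ℝ, (x, y) ∈ U → 0 < coefF5 P Q R S x y) :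
    ∀ k : Fin 2, ∀ x y : ℝ, (x, y) ∈ U →
      covD (gamConn P Q R S (phiGP1 P Q R S) (phiGP2 P Q R S))
          (frameY P Q R S) (frameX P Q R S) k x y
        = -(inv8 P Q R S x y) * frameX P Q R S k x y
          + inv6 P Q R S x y * frameY P Q R S k x y := by
  intro k x y hxy
  have hAsm := smoothA hU hP hQ hR hS
  have hBsm := smoothB hU hP hQ hR hS
  have hGsm := smoothG hU hP hQ hR hS
  have hHsm := smoothH hU hP hQ hR hS
  have hF5sm := smoothF5 hU hP hQ hR hS
  have hf5pos : 0 < coefF5 P Q R S x y := hpos x y hxy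
  have hfpos : 0 < frF P Q R S x y := Real.rpow_pos_of_pos hf5pos _
  have hfne : frF P Q R S x y ≠ 0 := hfpos.ne'
  -- slice derivatives
  have HAx := hAsm.sliceX hU hxy
  have HAy := hAsm.sliceY hU hxy
  have HBx := hBsm.sliceX hU hxy
  have HBy := hBsm.sliceY hU hxy
  have HGx := hGsm.sliceX hU hxy
  have HGy := hGsm.sliceY hU hxy
  have HHx := hHsm.sliceX hU hxy
  have HHy := hHsm.sliceY hU hxy
  have HF5x := hF5sm.sliceX hU hxy
  have HF5y := hF5sm.sliceY hU hxy
  -- frF slice derivatives via rpow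
  have HFx0 : HasDerivAt (fun t => frF P Q R S t y)
      (pdx (coefF5 P Q R S) x y * ((1:ℝ)/5) * coefF5 P Q R S x y ^ ((1:ℝ)/5 - 1)) x :=
    HF5x.rpow_const (Or.inl hf5pos.ne')
  have HFy0 : HasDerivAt (fun t => frF P Q R S x t)
      (pdy (coefF5 P Q R S) x y * ((1:ℝ)/5) * coefF5 P Q R S x y ^ ((1:ℝ)/5 - 1)) y :=
    HF5y.rpow_const (Or.inl hf5pos.ne')
  have hfxv : pdx (frF P Q R S) x y
      = pdx (coefF5 P Q R S) x y * ((1:ℝ)/5) * coefF5 P Q R S x y ^ ((1:ℝ)/5 - 1) := HFx0.deriv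
  have hfyv : pdy (frF P Q R S) x y
      = pdy (coefF5 P Q R S) x y * ((1:ℝ)/5) * coefF5 P Q R S x y ^ ((1:ℝ)/5 - 1) := HFy0.deriv
  have HFx : HasDerivAt (fun t => frF P Q R S t y) (pdx (frF P Q R S) x y) x := by
    rw [hfxv]; exact HFx0
  have HFy : HasDerivAt (fun t => frF P Q R S x t) (pdy (frF P Q R S) x y) y := by
    rw [hfyv]; exact HFy0
  have h45 : frF P Q R S x y ^ 4 = coefF5 P Q R S x y ^ ((4:ℝ)/5) := by
    show (coefF5 P Q R S x y ^ ((1:ℝ)/5)) ^ (4:ℕ) = _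
    rw [← Real.rpow_natCast (coefF5 P Q R S x y ^ ((1:ℝ)/5)) 4, ← Real.rpow_mul hf5pos.le]
    norm_num
  have hrpne : coefF5 P Q R S x y ^ ((4:ℝ)/5) ≠ 0 := (Real.rpow_pos_of_pos hf5pos _).ne'
  have hr1 : 5 * frF P Q R S x y ^ 4 * pdx (frF P Q R S) x y = pdx (coefF5 P Q R S) x y := by
    rw [hfxv, h45, show (1:ℝ)/5 - 1 = -((4:ℝ)/5) by norm_num, Real.rpow_neg hf5pos.le]
    field_simp
  have hr2 : 5 * frF P Q R S x y ^ 4 * pdy (frF P Q R S) x y = pdy (coefF5 P Q R S) x y := by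
    rw [hfyv, h45, show (1:ℝ)/5 - 1 = -((4:ℝ)/5) by norm_num, Real.rpow_neg hf5pos.le]
    field_simp
  have hT : frF P Q R S x y ^ 5 = coefF5 P Q R S x y := by
    show (coefF5 P Q R S x y ^ ((1:ℝ)/5)) ^ (5:ℕ) = _
    rw [← Real.rpow_natCast (coefF5 P Q R S x y ^ ((1:ℝ)/5)) 5, ← Real.rpow_mul hf5pos.le]
    norm_num
  -- differentiated identity A*G + B*H = 3*F5
  have hid : (fun t => coefA P Q R S t y * coefG P Q R S t y
      + coefB P Q R S t y * coefH P Q R S t y) = (fun t => 3 * coefF5 P Q R S t y) := by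
    funext t
    simp only [coefG, coefH, coefF5]
    ring
  have hidy : (fun t => coefA P Q R S x t * coefG P Q R S x t
      + coefB P Q R S x t * coefH P Q R S x t) = (fun t => 3 * coefF5 P Q R S x t) := by
    funext t
    simp only [coefG, coefH, coefF5]
    ring
  have hr3 : pdx (coefA P Q R S) x y * coefG P Q R S x y
      + coefA P Q R S x y * pdx (coefG P Q R S) x y
      + (pdx (coefB P Q R S) x y * coefH P Q R S x y
      + coefB P Q R S x y * pdx (coefH P Q R S) x y)
      = 3 * pdx (coefF5 P Q R S) x y := by
    have HL := (HAx.mul HGx).add (HBx.mul HHx)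
    have HR := HF5x.const_mul (3:ℝ)
    rw [← hid] at HR
    exact HL.unique HR
  have hr4 : pdy (coefA P Q R S) x y * coefG P Q R S x y
      + coefA P Q R S x y * pdy (coefG P Q R S) x y
      + (pdy (coefB P Q R S) x y * coefH P Q R S x y
      + coefB P Q R S x y * pdy (coefH P Q R S) x y)
      = 3 * pdy (coefF5 P Q R S) x y := by
    have HL := (HAy.mul HGy).add (HBy.mul HHy)
    have HR := HF5y.const_mul (3:ℝ)
    rw [← hidy] at HR
    exact HL.unique HR
  -- value identities
  have hrg : coefG P Q R S x y
      = -(coefB P Q R S x y) * pdx (coefB P Q R S) x y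
        - 3 * coefA P Q R S x y * pdy (coefB P Q R S) x y
        + 4 * coefB P Q R S x y * pdy (coefA P Q R S) x y
        + 3 * S x y * (coefA P Q R S x y)^2
        - 6 * R x y * coefA P Q R S x y * coefB P Q R S x y
        + 3 * Q x y * (coefB P Q R S x y)^2 := rfl
  have hrh : coefH P Q R S x y
      = -(coefA P Q R S x y) * pdy (coefA P Q R S) x y
        - 3 * coefB P Q R S x y * pdx (coefA P Q R S) x y
        + 4 * coefA P Q R S x y * pdx (coefB P Q R S) x y
        - 3 * P x y * (coefB P Q R S x y)^2
        + 6 * Q x y * coefA P Q R S x y * coefB P Q R S x y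
        - 3 * R x y * (coefA P Q R S x y)^2 := rfl
  have hrT : frF P Q R S x y ^ 5
      = coefA P Q R S x y * coefB P Q R S x y * pdy (coefA P Q R S) x y
        + coefA P Q R S x y * coefB P Q R S x y * pdx (coefB P Q R S) x y
        - (coefA P Q R S x y)^2 * pdy (coefB P Q R S) x y
        - (coefB P Q R S x y)^2 * pdx (coefA P Q R S) x y
        - P x y * (coefB P Q R S x y)^3
        + 3 * Q x y * coefA P Q R S x y * (coefB P Q R S x y)^2
        - 3 * R x y * (coefA P Q R S x y)^2 * coefB P Q R S x y
        + S x y * (coefA P Q R S x y)^3 := hT.trans rfl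
  -- derivatives of the frame field X
  have hne2 : frF P Q R S x y ^ 2 ≠ 0 := pow_ne_zero 2 hfne
  have HX00 : HasDerivAt (fun t => frameX P Q R S 0 t y)
      ((pdx (coefB P Q R S) x y * frF P Q R S x y ^ 2
        - coefB P Q R S x y * ((2:ℝ) * frF P Q R S x y ^ 1 * pdx (frF P Q R S) x y))
        / (frF P Q R S x y ^ 2) ^ 2) x := by
    exact_mod_cast HBx.div (HFx.pow 2) hne2
  have HX01 : HasDerivAt (fun t => frameX P Q R S 0 x t)
      ((pdy (coefB P Q R S) x y * frF P Q R S x y ^ 2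
        - coefB P Q R S x y * ((2:ℝ) * frF P Q R S x y ^ 1 * pdy (frF P Q R S) x y))
        / (frF P Q R S x y ^ 2) ^ 2) y := by
    exact_mod_cast HBy.div (HFy.pow 2) hne2
  have HX10 : HasDerivAt (fun t => frameX P Q R S 1 t y)
      ((-(pdx (coefA P Q R S) x y) * frF P Q R S x y ^ 2
        - -(coefA P Q R S x y) * ((2:ℝ) * frF P Q R S x y ^ 1 * pdx (frF P Q R S) x y))
        / (frF P Q R S x y ^ 2) ^ 2) x := by
    exact_mod_cast (HAx.neg).div (HFx.pow 2) hne2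
  have HX11 : HasDerivAt (fun t => frameX P Q R S 1 x t)
      ((-(pdy (coefA P Q R S) x y) * frF P Q R S x y ^ 2
        - -(coefA P Q R S x y) * ((2:ℝ) * frF P Q R S x y ^ 1 * pdy (frF P Q R S) x y))
        / (frF P Q R S x y ^ 2) ^ 2) y := by
    exact_mod_cast (HAy.neg).div (HFy.pow 2) hne2
  have hX00 : pdx (frameX P Q R S 0) x y = _ := HX00.deriv
  have hX01 : pdy (frameX P Q R S 0) x y = _ := HX01.deriv
  have hX10 : pdx (frameX P Q R S 1) x y = _ := HX10.deriv
  have hX11 : pdy (frameX P Q R S 1) x y = _ := HX11.deriv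
  clear HX00 HX01 HX10 HX11 HFx0 HFy0 HFx HFy HAx HAy HBx HBy HGx HGy HHx HHy HF5x HF5y
  clear hfxv hfyv h45 hT hid hidy
  fin_cases k
  · simp only [Fin.zero_eta, Fin.mk_one, covD, Fin.sum_univ_two, pd0, pd1]
    rw [hX00, hX01]
    simp only [frameX0, frameX1, frameY0, frameY1, gam000, gam001, gam010, gam011,
      inv6, inv8, phiGP1, phiGP2]
    linear_combination (norm := (field_simp; ring1)) (((-1 : ℝ) * (coefB P Q R S x y) * (coefG P Q R S x y) / (frF P Q R S x y)^11)) * hr1 + (((-1 : ℝ) * (coefB P Q R S x y) * (coefH P Q R S x y) / (frF P Q R S x y)^11)) * hr2 + (((1 : ℝ)/3 * (coefB P Q R S x y) * (coefG P Q R S x y) / (frF P Q R S x y)^11)) * hr3 + (((1 : ℝ)/3 * (coefB P Q R S x y) * (coefH P Q R S x y) / (frF P Q R S x y)^11)) * hr4 + (((-1 : ℝ) * (P x y) * (Q x y) * (coefB P Q R S x y)^4 / (frF P Q R S x y)^11) + ((2 : ℝ) * (P x y) * (R x y) * (coefA P Q R S x y) * (coefB P Q R S x y)^3 / (frF P Q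 R S x y)^11) + ((-1 : ℝ) * (P x y) * (S x y) * (coefA P Q R S x y)^2 * (coefB P Q R S x y)^2 / (frF P Q R S x y)^11) + ((1 : ℝ) * (P x y) * (coefA P Q R S x y) * (coefB P Q R S x y)^2 * (pdy (coefB P Q R S) x y) / (frF P Q R S x y)^11) + ((-4 : ℝ)/3 * (P x y) * (pdy (coefA P Q R S) x y) * (coefB P Q R S x y)^3 / (frF P Q R S x y)^11) + ((-1 : ℝ)/3 * (P x y) * (coefB P Q R S x y)^2 * (coefG P Q R S x y) / (frF P Q R S x y)^11) + ((1 : ℝ)/3 * (P x y) * (coefB P Q R S x y)^3 * (pdx (coefB P Q R S) x y) / (frF P Q R S x y)^11) + ((-2 : ℝ) * (Q x y) * (R x y) * (coefA P Q R S x y)^2 * (coefB P Q R S x y)^2 / (frF P Q R S x y)^11) + ((1 : ℝ) * (Q x y) * (S x y) * (coefA P Q R S x y)^3 * (coefB P Q R S x y) / (frF P Q R S x y)^11) + ((4 : ℝ)/3 * (Q x y) * (coefA P Q R S x y) * (pdy (coefA P Q R S) x y) * (coefB P Q R S x y)^2 / (frF P Q R S x y)^11) + ((1 : ℝ)/3 *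 (Q x y) * (coefA P Q R S x y) * (coefB P Q R S x y) * (coefG P Q R S x y) / (frF P Q R S x y)^11) + ((-1 : ℝ)/3 * (Q x y) * (coefA P Q R S x y) * (coefB P Q R S x y)^2 * (pdx (coefB P Q R S) x y) / (frF P Q R S x y)^11) + ((-1 : ℝ) * (Q x y) * (coefA P Q R S x y)^2 * (coefB P Q R S x y) * (pdy (coefB P Q R S) x y) / (frF P Q R S x y)^11) + ((-1 : ℝ) * (Q x y) * (pdx (coefA P Q R S) x y) * (coefB P Q R S x y)^3 / (frF P Q R S x y)^11) + ((1 : ℝ) * (Q x y) * (coefB P Q R S x y) / (frF P Q R S x y)^6) + ((-2 : ℝ)/3 * (Q x y) * (coefB P Q R S x y)^2 * (coefH P Q R S x y) / (frF P Q R S x y)^11) + ((1 : ℝ) * (Q x y)^2 * (coefA P Q R S x y) * (coefB P Q R S x y)^3 / (frF P Q R S x y)^11) + ((2 : ℝ) * (R x y) * (coefA P Q R S x y) * (pdx (coefA P Q R S) x y) * (coefB P Q R S x y)^2 / (frF P Q R S x y)^11) + ((2 : ℝ)/3 * (R x y) * (coefA P Q R S x y) * (coefB P Q R S x y) * (coefH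 P Q R S x y) / (frF P Q R S x y)^11) + ((-1 : ℝ) * (R x y) * (coefA P Q R S x y) / (frF P Q R S x y)^6) + ((-1 : ℝ) * (S x y) * (coefA P Q R S x y)^2 * (pdx (coefA P Q R S) x y) * (coefB P Q R S x y) / (frF P Q R S x y)^11) + ((1 : ℝ) * (coefA P Q R S x y) * (pdx (coefA P Q R S) x y) * (coefB P Q R S x y) * (pdy (coefB P Q R S) x y) / (frF P Q R S x y)^11) + ((-4 : ℝ)/3 * (pdx (coefA P Q R S) x y) * (pdy (coefA P Q R S) x y) * (coefB P Q R S x y)^2 / (frF P Q R S x y)^11) + ((-1 : ℝ)/3 * (pdx (coefA P Q R S) x y) * (coefB P Q R S x y) * (coefG P Q R S x y) / (frF P Q R S x y)^11) + ((1 : ℝ)/3 * (pdx (coefA P Q R S) x y) * (coefB P Q R S x y)^2 * (pdx (coefB P Q R S) x y) / (frF P Q R S x y)^11) + ((-1 : ℝ)/3 * (pdy (coefA P Q R S) x y) * (coefB P Q R S x y) * (coefH P Q R S x y) / (frF P Q R S x y)^11) + ((-1 : ℝ)/3 * (pdy (coefA P Q R S) x y) / (frF P Q R S x y)^6) + ((-1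 : ℝ)/3 * (coefB P Q R S x y) * (pdx (coefB P Q R S) x y) * (coefH P Q R S x y) / (frF P Q R S x y)^11) + ((4 : ℝ)/3 * (pdx (coefB P Q R S) x y) / (frF P Q R S x y)^6)) * hrg + (((1 : ℝ) * (P x y) * (R x y) * (coefB P Q R S x y)^4 / (frF P Q R S x y)^11) + ((-1 : ℝ) * (P x y) * (S x y) * (coefA P Q R S x y) * (coefB P Q R S x y)^3 / (frF P Q R S x y)^11) + ((1 : ℝ) * (P x y) * (coefB P Q R S x y)^3 * (pdy (coefB P Q R S) x y) / (frF P Q R S x y)^11) + ((4 : ℝ) * (Q x y) * (R x y) * (coefA P Q R S x y) * (coefB P Q R S x y)^3 / (frF P Q R S x y)^11) + ((-11 : ℝ)/3 * (Q x y) * (pdy (coefA P Q R S) x y) * (coefB P Q R S x y)^3 / (frF P Q R S x y)^11) + ((-1 : ℝ)/3 * (Q x y) * (coefB P Q R S x y)^3 * (pdx (coefB P Q R S) x y) / (frF P Q R S x y)^11) + ((-2 : ℝ) * (Q x y)^2 * (coefB P Q R S x y)^4 / (frF P Q R S x y)^11) + ((1 : ℝ) * (R x y) * (S x y) * (coefA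 P Q R S x y)^3 * (coefB P Q R S x y) / (frF P Q R S x y)^11) + ((5 : ℝ) * (R x y) * (coefA P Q R S x y) * (pdy (coefA P Q R S) x y) * (coefB P Q R S x y)^2 / (frF P Q R S x y)^11) + ((-1 : ℝ) * (R x y) * (coefA P Q R S x y)^2 * (coefB P Q R S x y) * (pdy (coefB P Q R S) x y) / (frF P Q R S x y)^11) + ((1 : ℝ) * (R x y) * (pdx (coefA P Q R S) x y) * (coefB P Q R S x y)^3 / (frF P Q R S x y)^11) + ((1 : ℝ) * (R x y) * (coefB P Q R S x y) / (frF P Q R S x y)^6) + ((-1 : ℝ)/3 * (R x y) * (coefB P Q R S x y)^2 * (coefH P Q R S x y) / (frF P Q R S x y)^11) + ((-3 : ℝ) * (R x y)^2 * (coefA P Q R S x y)^2 * (coefB P Q R S x y)^2 / (frF P Q R S x y)^11) + ((-1 : ℝ) * (S x y) * (coefA P Q R S x y) * (pdx (coefA P Q R S) x y) * (coefB P Q R S x y)^2 / (frF P Q R S x y)^11) + ((1 : ℝ)/3 * (S x y) * (coefA P Q R S x y) * (coefB P Q R S x y) * (coefH P Q R S x y) / (frF P Q R S x y)^11) + ((-1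 : ℝ) * (S x y) * (coefA P Q R S x y) / (frF P Q R S x y)^6) + ((-4 : ℝ)/3 * (S x y) * (coefA P Q R S x y)^2 * (pdy (coefA P Q R S) x y) * (coefB P Q R S x y) / (frF P Q R S x y)^11) + ((1 : ℝ)/3 * (S x y) * (coefA P Q R S x y)^2 * (coefB P Q R S x y) * (pdx (coefB P Q R S) x y) / (frF P Q R S x y)^11) + ((4 : ℝ)/3 * (coefA P Q R S x y) * (pdy (coefA P Q R S) x y) * (coefB P Q R S x y) * (pdy (coefB P Q R S) x y) / (frF P Q R S x y)^11) + ((-1 : ℝ)/3 * (coefA P Q R S x y) * (coefB P Q R S x y) * (pdx (coefB P Q R S) x y) * (pdy (coefB P Q R S) x y) / (frF P Q R S x y)^11) + ((1 : ℝ) * (pdx (coefA P Q R S) x y) * (coefB P Q R S x y)^2 * (pdy (coefB P Q R S) x y) / (frF P Q R S x y)^11) + ((-1 : ℝ) * (pdy (coefA P Q R S) x y) * (coefB P Q R S x y)^2 * (pdx (coefB P Q R S) x y) / (frF P Q R S x y)^11) + ((-4 : ℝ)/3 * (pdy (coefA P Q R S) x y)^2 * (coefB P Q R S x y)^2 / (frF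 P Q R S x y)^11) + ((-1 : ℝ)/3 * (coefB P Q R S x y) * (pdy (coefB P Q R S) x y) * (coefH P Q R S x y) / (frF P Q R S x y)^11) + ((1 : ℝ)/3 * (coefB P Q R S x y)^2 * (pdx (coefB P Q R S) x y)^2 / (frF P Q R S x y)^11) + ((1 : ℝ) * (pdy (coefB P Q R S) x y) / (frF P Q R S x y)^6)) * hrh + (((-3 : ℝ) * (P x y) * (R x y) * (coefB P Q R S x y)^3 / (frF P Q R S x y)^11) + ((3 : ℝ) * (P x y) * (S x y) * (coefA P Q R S x y) * (coefB P Q R S x y)^2 / (frF P Q R S x y)^11) + ((-3 : ℝ) * (P x y) * (coefB P Q R S x y)^2 * (pdy (coefB P Q R S) x y) / (frF P Q R S x y)^11) + ((-3 : ℝ) * (Q x y) * (R x y) * (coefA P Q R S x y) * (coefB P Q R S x y)^2 / (frF P Q R S x y)^11) + ((-3 : ℝ) * (Q x y) * (S x y) * (coefA P Q R S x y)^2 * (coefB P Q R S x y) / (frF P Q R S x y)^11) + ((3 : ℝ) * (Q x y) * (coefA P Q R S x y) * (coefB P Q R S x y) * (pdy (coefB P Q R S) x y) / (frF P Q R S x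 y)^11) + ((3 : ℝ) * (Q x y) * (pdy (coefA P Q R S) x y) * (coefB P Q R S x y)^2 / (frF P Q R S x y)^11) + ((3 : ℝ) * (Q x y) * (coefB P Q R S x y)^2 * (pdx (coefB P Q R S) x y) / (frF P Q R S x y)^11) + ((3 : ℝ) * (Q x y)^2 * (coefB P Q R S x y)^3 / (frF P Q R S x y)^11) + ((-3 : ℝ) * (R x y) * (coefA P Q R S x y) * (pdy (coefA P Q R S) x y) * (coefB P Q R S x y) / (frF P Q R S x y)^11) + ((-3 : ℝ) * (R x y) * (coefA P Q R S x y) * (coefB P Q R S x y) * (pdx (coefB P Q R S) x y) / (frF P Q R S x y)^11) + ((-3 : ℝ) * (R x y) * (pdx (coefA P Q R S) x y) * (coefB P Q R S x y)^2 / (frF P Q R S x y)^11) + ((3 : ℝ) * (R x y)^2 * (coefA P Q R S x y)^2 * (coefB P Q R S x y) / (frF P Q R S x y)^11) + ((3 : ℝ) * (S x y) * (coefA P Q R S x y) * (pdx (coefA P Q R S) x y) * (coefB P Q R S x y) / (frF P Q R S x y)^11) + ((-3 : ℝ) * (pdx (coefA P Q R S) x y) * (coefB P Q R S x y) * (pdy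 (coefB P Q R S) x y) / (frF P Q R S x y)^11) + ((17 : ℝ)/3 * (pdy (coefA P Q R S) x y) * (coefB P Q R S x y) * (pdx (coefB P Q R S) x y) / (frF P Q R S x y)^11) + ((-4 : ℝ)/3 * (pdy (coefA P Q R S) x y)^2 * (coefB P Q R S x y) / (frF P Q R S x y)^11) + ((-4 : ℝ)/3 * (coefB P Q R S x y) * (pdx (coefB P Q R S) x y)^2 / (frF P Q R S x y)^11)) * hrT
  · simp only [Fin.zero_eta, Fin.mk_one, covD, Fin.sum_univ_two, pd0, pd1]
    rw [hX10, hX11]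
    simp only [frameX0, frameX1, frameY0, frameY1, gam100, gam101, gam110, gam111,
      inv6, inv8, phiGP1, phiGP2]
    linear_combination (norm := (field_simp; ring1)) (((1 : ℝ) * (coefA P Q R S x y) * (coefG P Q R S x y) / (frF P Q R S x y)^11)) * hr1 + (((1 : ℝ) * (coefA P Q R S x y) * (coefH P Q R S x y) / (frF P Q R S x y)^11)) * hr2 + (((-1 : ℝ)/3 * (coefA P Q R S x y) * (coefG P Q R S x y) / (frF P Q R S x y)^11)) * hr3 + (((-1 : ℝ)/3 * (coefA P Q R S x y) * (coefH P Q R S x y) / (frF P Q R S x y)^11)) * hr4 + (((1 : ℝ) * (P x y) * (Q x y) * (coefA P Q R S x y) * (coefB P Q R S x y)^3 / (frF P Q R S x y)^11) + ((-2 : ℝ) * (P x y) * (R x y) * (coefA P Q R S x y)^2 * (coefB P Q R S x y)^2 / (frF P Q R S x y)^11) + ((1 : ℝ) * (P x y) * (S x y) * (coefA P Q R S x y)^3 * (coefB P Q R S x y) / (frF P Q R S x y)^11) + ((4 : ℝ)/3 * (P x y) * (coefA P Q R S x y) * (pdy (coefA P Q R S) x y) * (coefB P Q R S x y)^2 / (frF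 P Q R S x y)^11) + ((1 : ℝ)/3 * (P x y) * (coefA P Q R S x y) * (coefB P Q R S x y) * (coefG P Q R S x y) / (frF P Q R S x y)^11) + ((-1 : ℝ)/3 * (P x y) * (coefA P Q R S x y) * (coefB P Q R S x y)^2 * (pdx (coefB P Q R S) x y) / (frF P Q R S x y)^11) + ((-1 : ℝ) * (P x y) * (coefA P Q R S x y)^2 * (coefB P Q R S x y) * (pdy (coefB P Q R S) x y) / (frF P Q R S x y)^11) + ((-1 : ℝ) * (P x y) * (coefB P Q R S x y) / (frF P Q R S x y)^6) + ((2 : ℝ) * (Q x y) * (R x y) * (coefA P Q R S x y)^3 * (coefB P Q R S x y) / (frF P Q R S x y)^11) + ((-1 : ℝ) * (Q x y) * (S x y) * (coefA P Q R S x y)^4 / (frF P Q R S x y)^11) + ((1 : ℝ) * (Q x y) * (coefA P Q R S x y) * (pdx (coefA P Q R S) x y) * (coefB P Q R S x y)^2 / (frF P Q R S x y)^11) + ((2 : ℝ)/3 * (Q x y) * (coefA P Q R S x y) * (coefB P Q R S x y) * (coefH P Q R S x y) / (frF P Q R S x y)^11) + ((1 : ℝ) * (Q x y) * (coefA P Q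 R S x y) / (frF P Q R S x y)^6) + ((-4 : ℝ)/3 * (Q x y) * (coefA P Q R S x y)^2 * (pdy (coefA P Q R S) x y) * (coefB P Q R S x y) / (frF P Q R S x y)^11) + ((1 : ℝ)/3 * (Q x y) * (coefA P Q R S x y)^2 * (coefB P Q R S x y) * (pdx (coefB P Q R S) x y) / (frF P Q R S x y)^11) + ((-1 : ℝ)/3 * (Q x y) * (coefA P Q R S x y)^2 * (coefG P Q R S x y) / (frF P Q R S x y)^11) + ((1 : ℝ) * (Q x y) * (coefA P Q R S x y)^3 * (pdy (coefB P Q R S) x y) / (frF P Q R S x y)^11) + ((-1 : ℝ) * (Q x y)^2 * (coefA P Q R S x y)^2 * (coefB P Q R S x y)^2 / (frF P Q R S x y)^11) + ((-2 : ℝ) * (R x y) * (coefA P Q R S x y)^2 * (pdx (coefA P Q R S) x y) * (coefB P Q R S x y) / (frF P Q R S x y)^11) + ((-2 : ℝ)/3 * (R x y) * (coefA P Q R S x y)^2 * (coefH P Q R S x y) / (frF P Q R S x y)^11) + ((1 : ℝ) * (S x y) * (coefA P Q R S x y)^3 * (pdx (coefA P Q R S) x y) / (frF P Q R S x y)^11)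 + ((4 : ℝ)/3 * (coefA P Q R S x y) * (pdx (coefA P Q R S) x y) * (pdy (coefA P Q R S) x y) * (coefB P Q R S x y) / (frF P Q R S x y)^11) + ((-1 : ℝ)/3 * (coefA P Q R S x y) * (pdx (coefA P Q R S) x y) * (coefB P Q R S x y) * (pdx (coefB P Q R S) x y) / (frF P Q R S x y)^11) + ((1 : ℝ)/3 * (coefA P Q R S x y) * (pdx (coefA P Q R S) x y) * (coefG P Q R S x y) / (frF P Q R S x y)^11) + ((1 : ℝ)/3 * (coefA P Q R S x y) * (pdy (coefA P Q R S) x y) * (coefH P Q R S x y) / (frF P Q R S x y)^11) + ((1 : ℝ)/3 * (coefA P Q R S x y) * (pdx (coefB P Q R S) x y) * (coefH P Q R S x y) / (frF P Q R S x y)^11) + ((-1 : ℝ) * (coefA P Q R S x y)^2 * (pdx (coefA P Q R S) x y) * (pdy (coefB P Q R S) x y) / (frF P Q R S x y)^11) + ((-1 : ℝ) * (pdx (coefA P Q R S) x y) / (frF P Q R S x y)^6)) * hrg + (((-1 : ℝ) * (P x y) * (R x y) * (coefA P Q R S x y) * (coefB P Q R S x y)^3 / (frF P Q R S x y)^11)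 + ((1 : ℝ) * (P x y) * (S x y) * (coefA P Q R S x y)^2 * (coefB P Q R S x y)^2 / (frF P Q R S x y)^11) + ((-1 : ℝ) * (P x y) * (coefA P Q R S x y) * (coefB P Q R S x y)^2 * (pdy (coefB P Q R S) x y) / (frF P Q R S x y)^11) + ((-4 : ℝ) * (Q x y) * (R x y) * (coefA P Q R S x y)^2 * (coefB P Q R S x y)^2 / (frF P Q R S x y)^11) + ((11 : ℝ)/3 * (Q x y) * (coefA P Q R S x y) * (pdy (coefA P Q R S) x y) * (coefB P Q R S x y)^2 / (frF P Q R S x y)^11) + ((1 : ℝ)/3 * (Q x y) * (coefA P Q R S x y) * (coefB P Q R S x y)^2 * (pdx (coefB P Q R S) x y) / (frF P Q R S x y)^11) + ((-1 : ℝ) * (Q x y) * (coefB P Q R S x y) / (frF P Q R S x y)^6) + ((2 : ℝ) * (Q x y)^2 * (coefA P Q R S x y) * (coefB P Q R S x y)^3 / (frF P Q R S x y)^11) + ((-1 : ℝ) * (R x y) * (S x y) * (coefA P Q R S x y)^4 / (frF P Q R S x y)^11) + ((-1 : ℝ) * (R x y) * (coefA P Q R S x y) * (pdx (coefA P Q R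 S) x y) * (coefB P Q R S x y)^2 / (frF P Q R S x y)^11) + ((1 : ℝ)/3 * (R x y) * (coefA P Q R S x y) * (coefB P Q R S x y) * (coefH P Q R S x y) / (frF P Q R S x y)^11) + ((1 : ℝ) * (R x y) * (coefA P Q R S x y) / (frF P Q R S x y)^6) + ((-5 : ℝ) * (R x y) * (coefA P Q R S x y)^2 * (pdy (coefA P Q R S) x y) * (coefB P Q R S x y) / (frF P Q R S x y)^11) + ((1 : ℝ) * (R x y) * (coefA P Q R S x y)^3 * (pdy (coefB P Q R S) x y) / (frF P Q R S x y)^11) + ((3 : ℝ) * (R x y)^2 * (coefA P Q R S x y)^3 * (coefB P Q R S x y) / (frF P Q R S x y)^11) + ((1 : ℝ) * (S x y) * (coefA P Q R S x y)^2 * (pdx (coefA P Q R S) x y) * (coefB P Q R S x y) / (frF P Q R S x y)^11) + ((-1 : ℝ)/3 * (S x y) * (coefA P Q R S x y)^2 * (coefH P Q R S x y) / (frF P Q R S x y)^11) + ((4 : ℝ)/3 * (S x y) * (coefA P Q R S x y)^3 * (pdy (coefA P Q R S) x y) / (frF P Q R S x y)^11) + ((-1 : ℝ)/3 * (S x y)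 * (coefA P Q R S x y)^3 * (pdx (coefB P Q R S) x y) / (frF P Q R S x y)^11) + ((-1 : ℝ) * (coefA P Q R S x y) * (pdx (coefA P Q R S) x y) * (coefB P Q R S x y) * (pdy (coefB P Q R S) x y) / (frF P Q R S x y)^11) + ((1 : ℝ) * (coefA P Q R S x y) * (pdy (coefA P Q R S) x y) * (coefB P Q R S x y) * (pdx (coefB P Q R S) x y) / (frF P Q R S x y)^11) + ((4 : ℝ)/3 * (coefA P Q R S x y) * (pdy (coefA P Q R S) x y)^2 * (coefB P Q R S x y) / (frF P Q R S x y)^11) + ((-1 : ℝ)/3 * (coefA P Q R S x y) * (coefB P Q R S x y) * (pdx (coefB P Q R S) x y)^2 / (frF P Q R S x y)^11) + ((1 : ℝ)/3 * (coefA P Q R S x y) * (pdy (coefB P Q R S) x y) * (coefH P Q R S x y) / (frF P Q R S x y)^11) + ((-4 : ℝ)/3 * (coefA P Q R S x y)^2 * (pdy (coefA P Q R S) x y) * (pdy (coefB P Q R S) x y) / (frF P Q R S x y)^11) + ((1 : ℝ)/3 * (coefA P Q R S x y)^2 * (pdx (coefB P Q R S) x y) * (pdy (coefB P Q R S) x y)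 / (frF P Q R S x y)^11) + ((-4 : ℝ)/3 * (pdy (coefA P Q R S) x y) / (frF P Q R S x y)^6) + ((1 : ℝ)/3 * (pdx (coefB P Q R S) x y) / (frF P Q R S x y)^6)) * hrh + (((3 : ℝ) * (P x y) * (R x y) * (coefA P Q R S x y) * (coefB P Q R S x y)^2 / (frF P Q R S x y)^11) + ((-3 : ℝ) * (P x y) * (S x y) * (coefA P Q R S x y)^2 * (coefB P Q R S x y) / (frF P Q R S x y)^11) + ((3 : ℝ) * (P x y) * (coefA P Q R S x y) * (coefB P Q R S x y) * (pdy (coefB P Q R S) x y) / (frF P Q R S x y)^11) + ((3 : ℝ) * (Q x y) * (R x y) * (coefA P Q R S x y)^2 * (coefB P Q R S x y) / (frF P Q R S x y)^11) + ((3 : ℝ) * (Q x y) * (S x y) * (coefA P Q R S x y)^3 / (frF P Q R S x y)^11) + ((-3 : ℝ) * (Q x y) * (coefA P Q R S x y) * (pdy (coefA P Q R S) x y) * (coefB P Q R S x y) / (frF P Q R S x y)^11) + ((-3 : ℝ) * (Q x y) * (coefA P Q R S x y) * (coefB P Q R S x y) * (pdx (coefB P Q R S) x y) / (frF P Q R S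 x y)^11) + ((-3 : ℝ) * (Q x y) * (coefA P Q R S x y)^2 * (pdy (coefB P Q R S) x y) / (frF P Q R S x y)^11) + ((-3 : ℝ) * (Q x y)^2 * (coefA P Q R S x y) * (coefB P Q R S x y)^2 / (frF P Q R S x y)^11) + ((3 : ℝ) * (R x y) * (coefA P Q R S x y) * (pdx (coefA P Q R S) x y) * (coefB P Q R S x y) / (frF P Q R S x y)^11) + ((3 : ℝ) * (R x y) * (coefA P Q R S x y)^2 * (pdy (coefA P Q R S) x y) / (frF P Q R S x y)^11) + ((3 : ℝ) * (R x y) * (coefA P Q R S x y)^2 * (pdx (coefB P Q R S) x y) / (frF P Q R S x y)^11) + ((-3 : ℝ) * (R x y)^2 * (coefA P Q R S x y)^3 / (frF P Q R S x y)^11) + ((-3 : ℝ) * (S x y) * (coefA P Q R S x y)^2 * (pdx (coefA P Q R S) x y) / (frF P Q R S x y)^11) + ((3 : ℝ) * (coefA P Q R S x y) * (pdx (coefA P Q R S) x y) * (pdy (coefB P Q R S) x y) / (frF P Q R S x y)^11) + ((-17 : ℝ)/3 * (coefA P Q R S x y) * (pdy (coefA P Q R S) x y) * (pdx (coefB P Q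 R S) x y) / (frF P Q R S x y)^11) + ((4 : ℝ)/3 * (coefA P Q R S x y) * (pdy (coefA P Q R S) x y)^2 / (frF P Q R S x y)^11) + ((4 : ℝ)/3 * (coefA P Q R S x y) * (pdx (coefB P Q R S) x y)^2 / (frF P Q R S x y)^11)) * hrT
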